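/- Fix a linear ordering φ of the set of all primes. The class of finite φ-dispersive groups is a saturated formation: (i) every homomorphic image of a φ-dispersive group is φ-dispersive; (ii) if N_1 and N_2 are normal subgroups of a finite group G with N_1 ∩ N_2 = 1 and both G/N_1 and G/N_2 are φ-dispersive, then G is φ-dispersive; (iii) if G/Φ(G) is φ-dispersive, where Φ(G) is the Frattini subgroup of G, then G is φ-dispersive. -/

import Mathlib

open Subgroup Pointwise

/-- `σ` is a partition of the set of all primes: every member of every block is prime,
and every prime lies in exactly one block. -/
def IsPrimePartition {ι : Type*} (σ : ι → Set ℕ) : Prop :=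
  (∀ i, ∀ p ∈ σ i, Nat.Prime p) ∧ ∀ p : ℕ, Nat.Prime p → ∃! i, p ∈ σ i

/-- `σ(m)`: the set of indices `i` such that `σ i` contains a prime divisor of `m`. -/
def sigmaClasses {ι : Type*} (σ : ι → Set ℕ) (m : ℕ) : Set ι :=
  {i | ∃ p ∈ σ i, Nat.Prime p ∧ p ∣ m}

/-- A group of order `m` is `σ`-primary iff `m = 1` or `|σ(m)| = 1`. -/
def IsSigmaPrimary {ι : Type*} (σ : ι → Set ℕ) (m : ℕ) : Prop :=
  m = 1 ∨ (sigmaClasses σ m).ncard = 1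

/-- `m` is a `Π`-number: every prime divisor of `m` lies in some block belonging to `Π`. -/
def IsPiNumber {ι : Type*} (σ : ι → Set ℕ) (Pi : Set ι) (m : ℕ) : Prop :=
  ∀ p : ℕ, Nat.Prime p → p ∣ m → ∃ i ∈ Pi, p ∈ σ i

/-- `H` is a Hall `Π`-subgroup of `G`: `|H|` is a `Π`-number and `|G : H|` is a `Π'`-number. -/
def IsHallPiSubgroup {ι : Type*} (σ : ι → Set ℕ) (Pi : Set ι) {G : Type*} [Group G]
    (H : Subgroup G) : Prop :=
  IsPiNumber σ Pi (Nat.card H) ∧ IsPiNumber σ Piᶜ H.index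

/-- `A` is `σ`-subnormal in `G`. -/
def IsSigmaSubnormal {ι : Type*} (σ : ι → Set ℕ) {G : Type*} [Group G] (A : Subgroup G) : Prop :=
  ∃ (t : ℕ) (c : Fin (t + 1) → Subgroup G), Monotone c ∧ c 0 = A ∧ c (Fin.last t) = ⊤ ∧
    ∀ i : Fin t, ((c i.castSucc).subgroupOf (c i.succ)).Normal ∨
      IsSigmaPrimary σ
        (Nat.card (↥(c i.succ) ⧸ ((c i.castSucc).subgroupOf (c i.succ)).normalCore))

/-- `M/N` is a chief factor of `G`. -/
def IsChiefFactor {G : Type*} [Group G] (N M : Subgroup G) : Prop :=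
  N.Normal ∧ M.Normal ∧ N < M ∧
    ∀ K : Subgroup G, K.Normal → N ≤ K → K ≤ M → K = N ∨ K = M

/-- `G` is `σ`-soluble: every chief factor of `G` is `σ`-primary. -/
def IsSigmaSoluble {ι : Type*} (σ : ι → Set ℕ) (G : Type*) [Group G] : Prop :=
  ∀ N M : Subgroup G, IsChiefFactor N M →
    IsSigmaPrimary σ (Nat.card (↥M ⧸ N.subgroupOf M))

/-- `A` is an `n`-maximal subgroup of `G`. -/
def IsNMaximal {G : Type*} [Group G] (n : ℕ) (A : Subgroup G) : Prop :=
  ∃ c : Fin (n + 1) → Subgroup G, Monotone c ∧ c 0 = A ∧ c (Fin.last n) = ⊤ ∧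
    ∀ i : Fin n, IsCoatom ((c i.castSucc).subgroupOf (c i.succ))

/-- `A` is subnormal in `G`. -/
def IsSubnormalSubgroup {G : Type*} [Group G] (A : Subgroup G) : Prop :=
  ∃ (t : ℕ) (c : Fin (t + 1) → Subgroup G), Monotone c ∧ c 0 = A ∧ c (Fin.last t) = ⊤ ∧
    ∀ i : Fin t, ((c i.castSucc).subgroupOf (c i.succ)).Normal

/-- `S` is a complete Hall `σ`-set of `G`. -/
def IsCompleteHallSigmaSet {ι : Type*} (σ : ι → Set ℕ) {G : Type*} [Group G]
    (S : Set (Subgroup G)) : Prop :=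
  (∀ H ∈ S, H ≠ ⊥ → ∃ i ∈ sigmaClasses σ (Nat.card G), IsHallPiSubgroup σ {i} H) ∧
  ∀ i ∈ sigmaClasses σ (Nat.card G), ∃! H, H ∈ S ∧ IsHallPiSubgroup σ {i} H

/-- `G` is `σ`-dispersive. -/
def IsSigmaDispersive {ι : Type*} (σ : ι → Set ℕ) (G : Type*) [Group G] : Prop :=
  ∃ (t : ℕ) (c : Fin (t + 1) → Subgroup G) (H : Fin t → Subgroup G),
    StrictMono c ∧ c 0 = ⊥ ∧ c (Fin.last t) = ⊤ ∧ (∀ i, (c i).Normal) ∧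
    IsCompleteHallSigmaSet σ (Set.range H) ∧
    ∀ i : Fin t, (c i.castSucc : Set G) * (H i : Set G) = (c i.succ : Set G)


/-- `r` is a (strict) linear ordering of the set of all primes, where `r a b` means
`a <_φ b`. -/
def IsPrimeOrdering (r : ℕ → ℕ → Prop) : Prop :=
  (∀ p : ℕ, Nat.Prime p → ¬r p p) ∧
  (∀ p q s : ℕ, Nat.Prime p → Nat.Prime q → Nat.Prime s → r p q → r q s → r p s) ∧
  ∀ p q : ℕ, Nat.Prime p → Nat.Prime q → p ≠ q → r p q ∨ r q p

/-- `G` is `φ`-dispersive for the ordering `r` of the primes (`r a b` meaning `a <_φ b`):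
if `p 0 >_φ p 1 >_φ ⋯ >_φ p (t-1)` are the primes dividing `|G|` listed in decreasing
`φ`-order, then `G` has a normal series `⊥ = c 0 < ⋯ < c (Fin.last t) = ⊤` such that
`c i.succ / c i.castSucc` is isomorphic to a Sylow `p i`-subgroup of `G` for each `i`. -/
def IsPhiDispersive (r : ℕ → ℕ → Prop) (G : Type*) [Group G] : Prop :=
  ∃ (t : ℕ) (p : Fin t → ℕ) (c : Fin (t + 1) → Subgroup G) (hc : ∀ i, (c i).Normal),
    (∀ q : ℕ, q ∈ (Nat.card G).primeFactors ↔ ∃ i, p i = q) ∧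
    (∀ i j : Fin t, i < j → r (p j) (p i)) ∧
    StrictMono c ∧ c 0 = ⊥ ∧ c (Fin.last t) = ⊤ ∧
    ∀ i : Fin t,
      haveI := Subgroup.Normal.subgroupOf (hc i.castSucc) (c i.succ)
      ∃ P : Sylow (p i) G,
        Nonempty ((↥(c i.succ) ⧸ (c i.castSucc).subgroupOf (c i.succ)) ≃* ↥(P : Subgroup G))

section Helpers

variable {r : ℕ → ℕ → Prop}

/-- `H` is a normal Hall subgroup of `G` for the set of primes `φ`-above (or equal to) `p`. -/
def IsNHall (r : ℕ → ℕ → Prop) (p : ℕ) {G : Type*} [Group G] (H : Subgroup G) : Prop :=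
  H.Normal ∧ (∀ q : ℕ, q.Prime → q ∣ Nat.card H → q = p ∨ r p q) ∧
    (∀ q : ℕ, q.Prime → q ∣ H.index → ¬(q = p ∨ r p q))

lemma prime_asymm (hr : IsPrimeOrdering r) {p q : ℕ} (hp : p.Prime) (hq : q.Prime)
    (h : r p q) : ¬ r q p := fun h' => hr.1 p hp (hr.2.1 p q p hp hq hp h h')

/-- Any subgroup whose order has all prime divisors in the `p`-up-set is contained in a
normal Hall subgroup for that set. -/
lemma le_of_isNHall {G : Type*} [Group G] [Finite G] {p : ℕ} {H K : Subgroup G}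
    (hH : IsNHall r p H) (hK : ∀ q : ℕ, q.Prime → q ∣ Nat.card K → q = p ∨ r p q) :
    K ≤ H := by
  haveI := hH.1
  have hmap : K.map (QuotientGroup.mk' H) = ⊥ := by
    by_contra hne
    have h1 : Nat.card (K.map (QuotientGroup.mk' H)) ≠ 1 :=
      fun h => hne (Subgroup.card_eq_one.mp h)
    obtain ⟨q, hq, hqd⟩ := Nat.exists_prime_and_dvd h1
    have hdK : Nat.card (K.map (QuotientGroup.mk' H)) ∣ Nat.card K :=
      Subgroup.card_dvd_of_surjective ((QuotientGroup.mk' H).subgroupMap K)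
        ((QuotientGroup.mk' H).subgroupMap_surjective K)
    have hdI : Nat.card (K.map (QuotientGroup.mk' H)) ∣ H.index :=
      Subgroup.card_subgroup_dvd_card _
    exact hH.2.2 q hq (hqd.trans hdI) (hK q hq (hqd.trans hdK))
  rw [Subgroup.map_eq_bot_iff, QuotientGroup.ker_mk'] at hmap
  exact hmap

end Helpers

section Forward

variable {r : ℕ → ℕ → Prop}

lemma nhall_of_dispersive {G : Type*} [Group G] [Finite G] (hr : IsPrimeOrdering r)
    (h : IsPhiDispersive r G) (p : ℕ) (hp : p.Prime) : ∃ H : Subgroup G, IsNHall r p H := by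
  classical
  obtain ⟨t, pr, c, hc, hpf, hord, hmono, h0, hlast, hsyl⟩ := h
  have hprime : ∀ i : Fin t, (pr i).Prime := fun i =>
    Nat.prime_of_mem_primeFactors ((hpf (pr i)).mpr ⟨i, rfl⟩)
  have hdvdG : ∀ i : Fin t, pr i ∣ Nat.card G := fun i =>
    Nat.dvd_of_mem_primeFactors ((hpf (pr i)).mpr ⟨i, rfl⟩)
  have hcard0 : Nat.card G ≠ 0 := Nat.card_pos.ne'
  have hfac : ∀ i : Fin t,
      Nat.card (↥(c i.succ) ⧸ (c i.castSucc).subgroupOf (c i.succ)) =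
        pr i ^ (Nat.card G).factorization (pr i) := by
    intro i
    haveI := Fact.mk (hprime i)
    haveI := Subgroup.Normal.subgroupOf (hc i.castSucc) (c i.succ)
    obtain ⟨P, ⟨e⟩⟩ := hsyl i
    rw [Nat.card_congr e.toEquiv]
    exact P.card_eq_multiplicity
  have D1 : ∀ k : ℕ, ∀ hk : k ≤ t, ∀ q : ℕ, q.Prime →
      q ∣ Nat.card (c ⟨k, by omega⟩) → ∃ j : Fin t, (j : ℕ) < k ∧ pr j = q := by
    intro k
    induction k with
    | zero =>
      intro hk q hq hqd
      rw [show (⟨0, by omega⟩ : Fin (t+1)) = 0 from rfl, h0, Subgroup.card_bot] at hqd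
      exact absurd (Nat.dvd_one.mp hqd) hq.ne_one
    | succ k ih =>
      intro hk q hq hqd
      have hkt : k < t := hk
      have hle : c (⟨k, hkt⟩ : Fin t).castSucc ≤ c (⟨k, hkt⟩ : Fin t).succ :=
        hmono.monotone (Fin.castSucc_le_succ _)
      have hprod : Nat.card (c (⟨k, hkt⟩ : Fin t).succ) =
          Nat.card (↥(c (⟨k, hkt⟩ : Fin t).succ) ⧸
            (c (⟨k, hkt⟩ : Fin t).castSucc).subgroupOf (c (⟨k, hkt⟩ : Fin t).succ)) *
          Nat.card (c (⟨k, hkt⟩ : Fin t).castSucc) := by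
        rw [Subgroup.card_eq_card_quotient_mul_card_subgroup
          ((c (⟨k, hkt⟩ : Fin t).castSucc).subgroupOf (c (⟨k, hkt⟩ : Fin t).succ)),
          Nat.card_congr (Subgroup.subgroupOfEquivOfLe hle).toEquiv]
      have hqd' : q ∣ Nat.card (c (⟨k, hkt⟩ : Fin t).succ) := by
        convert hqd using 3; rfl
      rw [hprod, hfac] at hqd'
      rcases (Nat.Prime.dvd_mul hq).mp hqd' with hcase | hcase
      · exact ⟨⟨k, hkt⟩, Nat.lt_succ_self k,
          ((Nat.prime_dvd_prime_iff_eq hq (hprime _)).mp (hq.dvd_of_dvd_pow hcase)).symm⟩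
      · obtain ⟨j, hj, hjq⟩ := ih (le_of_lt hkt) q hq (by convert hcase using 3; rfl)
        exact ⟨j, Nat.lt_succ_of_lt hj, hjq⟩
  have D2 : ∀ m k : ℕ, ∀ _hk : k + m = t, ∀ q : ℕ, q.Prime →
      q ∣ (c ⟨k, by omega⟩).index → ∃ j : Fin t, k ≤ (j : ℕ) ∧ pr j = q := by
    intro m
    induction m with
    | zero =>
      intro k hk q hq hqd
      rw [show (⟨k, by omega⟩ : Fin (t+1)) = Fin.last t from by ext; simpa using by omega,
        hlast, Subgroup.index_top] at hqd
      exact absurd (Nat.dvd_one.mp hqd) hq.ne_one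
    | succ m ih =>
      intro k hk q hq hqd
      have hkt : k < t := by omega
      have hle : c (⟨k, hkt⟩ : Fin t).castSucc ≤ c (⟨k, hkt⟩ : Fin t).succ :=
        hmono.monotone (Fin.castSucc_le_succ _)
      have hidx := Subgroup.relIndex_mul_index hle
      have hrel : (c (⟨k, hkt⟩ : Fin t).castSucc).relIndex (c (⟨k, hkt⟩ : Fin t).succ) =
          pr ⟨k, hkt⟩ ^ (Nat.card G).factorization (pr ⟨k, hkt⟩) := hfac ⟨k, hkt⟩
      have hqd' : q ∣ (c (⟨k, hkt⟩ : Fin t).castSucc).index := by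
        convert hqd using 3; rfl
      rw [← hidx, hrel] at hqd'
      rcases (Nat.Prime.dvd_mul hq).mp hqd' with hcase | hcase
      · exact ⟨⟨k, hkt⟩, le_refl _,
          ((Nat.prime_dvd_prime_iff_eq hq (hprime _)).mp (hq.dvd_of_dvd_pow hcase)).symm⟩
      · obtain ⟨j, hj, hjq⟩ := ih (k+1) (by omega) q hq (by convert hcase using 3; rfl)
        exact ⟨j, by omega, hjq⟩
  by_cases hex : ∃ n : ℕ, ∃ hn : n < t, ¬(pr ⟨n, hn⟩ = p ∨ r p (pr ⟨n, hn⟩))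
  · obtain ⟨hn₀t, hn₀⟩ := Nat.find_spec hex
    refine ⟨c ⟨Nat.find hex, by omega⟩, hc _, ?_, ?_⟩
    · intro q hq hqd
      obtain ⟨j, hjlt, hjq⟩ := D1 (Nat.find hex) (le_of_lt hn₀t) q hq hqd
      have hmin := Nat.find_min hex hjlt
      rw [← hjq]
      by_contra hcon
      exact hmin ⟨j.2, by simpa using hcon⟩
    · intro q hq hqd hmem
      obtain ⟨j, hjge, hjq⟩ := D2 (t - Nat.find hex) (Nat.find hex) (by omega) q hq hqd
      apply hn₀
      rcases eq_or_lt_of_le hjge with heq | hlt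
      · have : (⟨Nat.find hex, hn₀t⟩ : Fin t) = j := by ext; simpa using heq
        rw [this, hjq]; exact hmem
      · have hrr : r (pr j) (pr ⟨Nat.find hex, hn₀t⟩) :=
          hord ⟨Nat.find hex, hn₀t⟩ j hlt
        rcases hmem with hmem | hmem
        · right; rwa [hjq, hmem] at hrr
        · right
          exact hr.2.1 p (pr j) _ hp (hprime j) (hprime _) (hjq ▸ hmem) hrr
  · push_neg at hex
    refine ⟨⊤, inferInstance, ?_, ?_⟩
    · intro q hq hqd
      rw [Subgroup.card_top] at hqd
      obtain ⟨i, hi⟩ := (hpf q).mp (Nat.mem_primeFactors.mpr ⟨hq, hqd, hcard0⟩)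
      have := hex i.1 i.2
      rw [← hi]
      simpa using this
    · intro q hq hqd _
      rw [Subgroup.index_top] at hqd
      exact hq.ne_one (Nat.dvd_one.mp hqd)

end Forward
section Backward

variable {r : ℕ → ℕ → Prop}

lemma dispersive_of_nhall {G : Type*} [Group G] [Finite G] (hr : IsPrimeOrdering r)
    (h : ∀ p : ℕ, p.Prime → p ∣ Nat.card G → ∃ H : Subgroup G, IsNHall r p H) :
    IsPhiDispersive r G := by
  classical
  have hn0 : Nat.card G ≠ 0 := Nat.card_pos.ne'
  set F := (Nat.card G).primeFactors with hF
  let le' : {q : ℕ // q ∈ F} → {q : ℕ // q ∈ F} → Prop := fun a b => a = b ∨ r b.1 a.1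
  have hsprime : ∀ a : {q : ℕ // q ∈ F}, (a.1).Prime := fun a =>
    Nat.prime_of_mem_primeFactors a.2
  haveI : DecidableRel le' := fun _ _ => Classical.propDecidable _
  haveI : IsTrans _ le' := ⟨by
    rintro a b c (rfl | hab) hbc
    · exact hbc
    · rcases hbc with rfl | hbc
      · exact Or.inr hab
      · exact Or.inr (hr.2.1 _ _ _ (hsprime c) (hsprime b) (hsprime a) hbc hab)⟩
  haveI : IsAntisymm _ le' := ⟨by
    rintro a b (rfl | hab) hba
    · rfl
    · rcases hba with rfl | hba
      · rfl
      · exact absurd hba (prime_asymm hr (hsprime b) (hsprime a) hab)⟩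
  haveI : IsTotal _ le' := ⟨by
    intro a b
    by_cases hab : a = b
    · exact Or.inl (Or.inl hab)
    · rcases hr.2.2 a.1 b.1 (hsprime a) (hsprime b) (fun hv => hab (Subtype.ext hv)) with hx | hx
      · exact Or.inr (Or.inr hx)
      · exact Or.inl (Or.inr hx)⟩
  set l := Finset.univ.sort le' with hl
  set L := l.length with hL
  set p : Fin L → ℕ := fun i => (l.get i).1 with hp
  have hpmem : ∀ i, p i ∈ F := fun i => (l.get i).2
  have hprime : ∀ i, (p i).Prime := fun i => Nat.prime_of_mem_primeFactors (hpmem i)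
  have hpdvd : ∀ i, p i ∣ Nat.card G := fun i => Nat.dvd_of_mem_primeFactors (hpmem i)
  have hnodup : l.Nodup := Finset.sort_nodup Finset.univ le'
  have hsorted : l.Pairwise le' := Finset.pairwise_sort Finset.univ le'
  have hpinj : Function.Injective p := fun i j hij =>
    List.nodup_iff_injective_get.mp hnodup (Subtype.ext hij)
  have hord : ∀ i j : Fin L, i < j → r (p j) (p i) := by
    intro i j hij
    rcases hsorted.rel_get_of_lt hij with heq | hlt
    · exact absurd (hpinj (congrArg Subtype.val heq)) (Fin.ne_of_lt hij)
    · exact hlt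
  have hsurj : ∀ q ∈ F, ∃ i, p i = q := by
    intro q hq
    have hmem : (⟨q, hq⟩ : {q : ℕ // q ∈ F}) ∈ l := by
      rw [hl, Finset.mem_sort]; exact Finset.mem_univ _
    obtain ⟨i, hi, hgi⟩ := List.mem_iff_getElem.mp hmem
    exact ⟨⟨i, hi⟩, congrArg Subtype.val hgi⟩
  -- choose the Hall subgroups
  have hex : ∀ i : Fin L, ∃ H : Subgroup G, IsNHall r (p i) H := fun i =>
    h (p i) (hprime i) (hpdvd i)
  choose HH hHH using hex
  set c : Fin (L + 1) → Subgroup G := fun k =>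
    if hk : (k : ℕ) = 0 then ⊥ else HH ⟨(k : ℕ) - 1, by omega⟩ with hc
  have hcval : ∀ (k : Fin (L+1)) (hk : (k : ℕ) ≠ 0),
      c k = HH ⟨(k : ℕ) - 1, by omega⟩ := by
    intro k hk
    show (if h : (k : ℕ) = 0 then (⊥ : Subgroup G) else HH ⟨(k : ℕ) - 1, by omega⟩) = _
    rw [dif_neg hk]
  have hcnorm : ∀ k, (c k).Normal := by
    intro k
    by_cases hk : (k : ℕ) = 0
    · have : c k = ⊥ := by
        show (if h : (k : ℕ) = 0 then (⊥ : Subgroup G) else _) = ⊥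
        rw [dif_pos hk]
      rw [this]; infer_instance
    · rw [hcval k hk]; exact (hHH _).1
  have hc0 : c 0 = ⊥ := dif_pos rfl
  have hcsucc : ∀ j : Fin L, c j.succ = HH j := by
    intro j
    rw [hcval j.succ (by simp)]
    exact congrArg HH (Fin.ext (by simp))
  have hNi : ∀ j : Fin L, IsNHall r (p j) (c j.succ) := fun j => (hcsucc j) ▸ hHH j
  -- prime divisors of the order of c k are among p 0, ..., p (k-1)
  have hcard_mem : ∀ (k : Fin (L+1)) (q : ℕ), q.Prime → q ∣ Nat.card (c k) →
      ∃ j : Fin L, (j : ℕ) < (k : ℕ) ∧ p j = q := by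
    intro k q hq hqd
    by_cases hk : (k : ℕ) = 0
    · have hck : c k = ⊥ := by
        show (if h : (k : ℕ) = 0 then (⊥ : Subgroup G) else _) = ⊥
        rw [dif_pos hk]
      rw [hck, Subgroup.card_bot] at hqd
      exact absurd (Nat.dvd_one.mp hqd) hq.ne_one
    · rw [hcval k hk] at hqd
      rcases (hHH ⟨(k : ℕ) - 1, by omega⟩).2.1 q hq hqd with hcase | hcase
      · exact ⟨⟨(k : ℕ) - 1, by omega⟩, show (k : ℕ) - 1 < (k : ℕ) by omega, hcase.symm⟩
      · -- q is a prime above p ⟨k-1⟩, so q = p j for some j < k - 1... contradiction-free: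
        -- q divides card G since it divides card of a subgroup
        have hqn : q ∣ Nat.card G :=
          hqd.trans (Subgroup.card_subgroup_dvd_card _)
        obtain ⟨j, hj⟩ := hsurj q (Nat.mem_primeFactors.mpr ⟨hq, hqn, hn0⟩)
        refine ⟨j, ?_, hj⟩
        -- r (p ⟨k-1⟩) (p j)  →  j < k - 1 ∨ j = ... : show j < k
        rw [← hj] at hcase
        by_contra hjk
        push_neg at hjk
        -- (k:ℕ) ≤ j, so ⟨k-1,_⟩ ≤ j with ⟨k-1⟩ < j or =
        rcases lt_or_eq_of_le (show ((⟨(k : ℕ) - 1, by omega⟩ : Fin L) : ℕ) ≤ (j : ℕ) from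
          show (k : ℕ) - 1 ≤ (j : ℕ) by omega) with hlt | heq
        · exact prime_asymm hr (hprime _) (hprime j) hcase
            (hord _ j (show ((⟨(k : ℕ) - 1, by omega⟩ : Fin L) : ℕ) < (j : ℕ) from hlt))
        · have hjj : (⟨(k : ℕ) - 1, by omega⟩ : Fin L) = j := Fin.ext heq
          rw [hjj] at hcase
          exact absurd hcase (hr.1 _ (hprime j))
  -- prime divisors of the index of c k are among p k, ..., p (L-1)
  have hidx_mem : ∀ (k : Fin (L+1)) (q : ℕ), q.Prime → q ∣ (c k).index →
      ∀ j : Fin L, p j = q → (k : ℕ) ≤ (j : ℕ) := by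
    intro k q hq hqd j hj
    by_contra hjk
    push_neg at hjk
    have hk0 : (k : ℕ) ≠ 0 := by omega
    rw [hcval k hk0] at hqd
    have hthis := (hHH ⟨(k : ℕ) - 1, by omega⟩).2.2 q hq hqd
    apply hthis
    rcases lt_or_eq_of_le (show (j : ℕ) ≤ ((⟨(k : ℕ) - 1, by omega⟩ : Fin L) : ℕ) from
      show (j : ℕ) ≤ (k : ℕ) - 1 by omega) with hlt | heq
    · exact Or.inr (hj ▸ hord j _ (show (j : ℕ) < (k : ℕ) - 1 from hlt))
    · have hjj : j = ⟨(k : ℕ) - 1, by omega⟩ := Fin.ext heq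
      exact Or.inl (hj.symm.trans (congrArg p hjj))
  -- order comparison: r (p i) (p j) implies j < i
  have hord_inv : ∀ i j : Fin L, r (p i) (p j) → (j : ℕ) < (i : ℕ) := by
    intro i j hij
    rcases lt_trichotomy (j : ℕ) (i : ℕ) with hlt | heq | hgt
    · exact hlt
    · rw [show j = i from Fin.ext heq] at hij
      exact absurd hij (hr.1 _ (hprime i))
    · exact absurd hij (prime_asymm hr (hprime j) (hprime i) (hord i j hgt))
  have hmono_le : ∀ (k : Fin (L+1)) (j : Fin L), (k : ℕ) ≤ (j : ℕ) → c k ≤ c j.succ := by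
    intro k j hkj
    apply le_of_isNHall (hNi j)
    intro q hq hqd
    obtain ⟨j', hj', hj'q⟩ := hcard_mem k q hq hqd
    rcases lt_or_eq_of_le (show (j' : ℕ) ≤ (j : ℕ) by omega) with hlt | heq
    · exact Or.inr (hj'q ▸ hord j' j hlt)
    · exact Or.inl (hj'q.symm.trans (congrArg p (Fin.ext heq)))
  have hmono_adj : ∀ j : Fin L, c j.castSucc ≤ c j.succ := fun j =>
    hmono_le j.castSucc j (le_of_eq (Fin.coe_castSucc j))
  have hdvdsucc : ∀ j : Fin L, p j ∣ Nat.card (c j.succ) := by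
    intro j
    have hnd : ¬ p j ∣ (c j.succ).index := fun hd =>
      (hNi j).2.2 (p j) (hprime j) hd (Or.inl rfl)
    have hdn : p j ∣ Nat.card (c j.succ) * (c j.succ).index := by
      rw [Subgroup.card_mul_index]; exact hpdvd j
    rcases ((hprime j).dvd_mul).mp hdn with h1 | h1
    · exact h1
    · exact absurd h1 hnd
  have hndcast : ∀ j : Fin L, ¬ p j ∣ Nat.card (c j.castSucc) := by
    intro j hd
    obtain ⟨j', hj', hj'q⟩ := hcard_mem j.castSucc (p j) (hprime j) hd
    have h1 := congrArg Fin.val (hpinj hj'q)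
    have h2 : ((j.castSucc : Fin (L+1)) : ℕ) = (j : ℕ) := Fin.coe_castSucc j
    omega
  have hstrict : StrictMono c := by
    rw [Fin.strictMono_iff_lt_succ]
    intro j
    refine lt_of_le_of_ne (hmono_adj j) (fun heqc => ?_)
    have := hdvdsucc j
    rw [← heqc] at this
    exact hndcast j this
  have hlast : c (Fin.last L) = ⊤ := by
    by_cases hL0 : L = 0
    · have hF0 : (Nat.card G).primeFactors = ∅ := by
        rw [← hF, Finset.eq_empty_iff_forall_notMem]
        intro q hq
        obtain ⟨i, _⟩ := hsurj q hq
        exact absurd i.2 (by omega)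
      have hn1 : Nat.card G = 1 := by
        rcases Nat.primeFactors_eq_empty.mp hF0 with h1 | h1
        · exact absurd h1 hn0
        · exact h1
      have hsub : Subsingleton G := (Nat.card_eq_one_iff_unique.mp hn1).1
      apply Subgroup.ext
      intro x
      rw [Subsingleton.elim x 1]
      exact iff_of_true (one_mem _) trivial
    · rw [← Subgroup.index_eq_one]
      by_contra hne
      obtain ⟨q, hq, hqd⟩ := Nat.exists_prime_and_dvd hne
      have hqn : q ∣ Nat.card G := hqd.trans (Subgroup.index_dvd_card _)
      obtain ⟨j, hj⟩ := hsurj q (Nat.mem_primeFactors.mpr ⟨hq, hqn, hn0⟩)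
      have h1 := hidx_mem (Fin.last L) q hq hqd j hj
      have h2 : ((Fin.last L : Fin (L+1)) : ℕ) = L := rfl
      have h3 := j.2
      omega
  have hfactor : ∀ i : Fin L,
      haveI := Subgroup.Normal.subgroupOf (hcnorm i.castSucc) (c i.succ)
      ∃ P : Sylow (p i) G,
        Nonempty ((↥(c i.succ) ⧸ (c i.castSucc).subgroupOf (c i.succ)) ≃* ↥(P : Subgroup G)) := by
    intro i
    haveI := Fact.mk (hprime i)
    haveI := Subgroup.Normal.subgroupOf (hcnorm i.castSucc) (c i.succ)
    obtain ⟨P⟩ : Nonempty (Sylow (p i) G) := Sylow.nonempty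
    have hPcard : Nat.card (P : Subgroup G) = p i ^ (Nat.card G).factorization (p i) :=
      P.card_eq_multiplicity
    have hndidx : ¬ p i ∣ (c i.succ).index := fun hd =>
      (hNi i).2.2 (p i) (hprime i) hd (Or.inl rfl)
    have hPle : (P : Subgroup G) ≤ c i.succ := by
      apply le_of_isNHall (hNi i)
      intro q hq hqd
      rw [hPcard] at hqd
      exact Or.inl ((Nat.prime_dvd_prime_iff_eq hq (hprime i)).mp (hq.dvd_of_dvd_pow hqd))
    have hdisj : (P : Subgroup G) ⊓ c i.castSucc = ⊥ := by
      apply inf_eq_bot_of_coprime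
      rw [hPcard]
      exact Nat.Coprime.pow_left _ (((hprime i).coprime_iff_not_dvd).mpr (hndcast i))
    set f : ↥(P : Subgroup G) →* ↥(c i.succ) ⧸ (c i.castSucc).subgroupOf (c i.succ) :=
      (QuotientGroup.mk' ((c i.castSucc).subgroupOf (c i.succ))).comp
        (Subgroup.inclusion hPle) with hfdef
    have hinj : Function.Injective f := by
      refine (injective_iff_map_eq_one f).mpr (fun x hx => ?_)
      have hx1 : (Subgroup.inclusion hPle) x ∈ (c i.castSucc).subgroupOf (c i.succ) :=
        (QuotientGroup.eq_one_iff _).mp hx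
      have hx2 : (x : G) ∈ c i.castSucc := by
        simpa [Subgroup.mem_subgroupOf] using hx1
      have hx3 : (x : G) ∈ (P : Subgroup G) ⊓ c i.castSucc := ⟨x.2, hx2⟩
      rw [hdisj] at hx3
      exact Subtype.ext (by simpa using hx3)
    have hprodc : Nat.card (c i.succ) =
        Nat.card (↥(c i.succ) ⧸ (c i.castSucc).subgroupOf (c i.succ)) *
          Nat.card (c i.castSucc) := by
      rw [Subgroup.card_eq_card_quotient_mul_card_subgroup
        ((c i.castSucc).subgroupOf (c i.succ)),
        Nat.card_congr (Subgroup.subgroupOfEquivOfLe (hmono_adj i)).toEquiv]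
    set Qc := Nat.card (↥(c i.succ) ⧸ (c i.castSucc).subgroupOf (c i.succ)) with hQcdef
    have hq0 : Qc ≠ 0 := Nat.card_pos.ne'
    have hsv : p i ^ (Nat.card G).factorization (p i) ∣ Nat.card (c i.succ) := by
      have h1 : p i ^ (Nat.card G).factorization (p i) ∣
          Nat.card (c i.succ) * (c i.succ).index := by
        rw [Subgroup.card_mul_index]; exact Nat.ordProj_dvd _ _
      exact Nat.Coprime.dvd_of_dvd_mul_right
        (Nat.Coprime.pow_left _ (((hprime i).coprime_iff_not_dvd).mpr hndidx)) h1
    have hqv : p i ^ (Nat.card G).factorization (p i) ∣ Qc := by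
      rw [hprodc] at hsv
      exact Nat.Coprime.dvd_of_dvd_mul_right
        (Nat.Coprime.pow_left _ (((hprime i).coprime_iff_not_dvd).mpr (hndcast i))) hsv
    have hQdvd : Qc ∣ Nat.card (c i.succ) := Dvd.intro _ (hprodc.symm)
    have hrel : (c i.castSucc).relIndex (c i.succ) = Qc := rfl
    have hQidx : Qc ∣ (c i.castSucc).index := by
      rw [← Subgroup.relIndex_mul_index (hmono_adj i), hrel]
      exact dvd_mul_right _ _
    have huniq : ∀ q' : ℕ, q'.Prime → q' ∣ Qc → q' = p i := by
      intro q' hq' hqd'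
      rcases (hNi i).2.1 q' hq' (hqd'.trans hQdvd) with he | he
      · exact he
      · exfalso
        have hq'n : q' ∣ Nat.card G :=
          (hqd'.trans hQdvd).trans (Subgroup.card_subgroup_dvd_card _)
        obtain ⟨j', hj'⟩ := hsurj q' (Nat.mem_primeFactors.mpr ⟨hq', hq'n, hn0⟩)
        have hji : (j' : ℕ) < (i : ℕ) := hord_inv i j' (hj' ▸ he)
        have h1 := hidx_mem i.castSucc q' hq' (hqd'.trans hQidx) j' hj'
        have h2 : ((i.castSucc : Fin (L+1)) : ℕ) = (i : ℕ) := Fin.coe_castSucc i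
        omega
    have hvpos : 0 < (Nat.card G).factorization (p i) :=
      (hprime i).factorization_pos_of_dvd hn0 (hpdvd i)
    have hQne1 : Qc ≠ 1 := by
      intro h1
      have : p i ∣ Qc := (dvd_pow_self (p i) hvpos.ne').trans hqv
      rw [h1] at this
      exact (hprime i).ne_one (Nat.dvd_one.mp this)
    have hQpow := Nat.eq_prime_pow_of_unique_prime_dvd hq0
      (fun {d} hd hdd => huniq d hd hdd)
    have hle1 : Qc.primeFactorsList.length ≤ (Nat.card G).factorization (p i) := by
      rw [← Nat.Prime.pow_dvd_iff_le_factorization (hprime i) hn0, ← hQpow]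
      exact hQdvd.trans (Subgroup.card_subgroup_dvd_card _)
    have hle2 : (Nat.card G).factorization (p i) ≤ Qc.primeFactorsList.length := by
      rw [← Nat.pow_dvd_pow_iff_le_right (hprime i).one_lt, ← hQpow]
      exact hqv
    have hQval : Qc = p i ^ (Nat.card G).factorization (p i) := by
      rw [hQpow, le_antisymm hle1 hle2]
    have hcards : Nat.card ↥(P : Subgroup G) =
        Nat.card (↥(c i.succ) ⧸ (c i.castSucc).subgroupOf (c i.succ)) := by
      rw [hPcard, ← hQcdef, hQval]
    have hbij : Function.Bijective f :=
      (Nat.bijective_iff_injective_and_card f).mpr ⟨hinj, hcards⟩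
    exact ⟨P, ⟨(MulEquiv.ofBijective f hbij).symm⟩⟩
  refine ⟨L, p, c, hcnorm, ?_, hord, hstrict, hc0, hlast, hfactor⟩
  intro q
  constructor
  · intro hq
    exact hsurj q (by rwa [← hF] at hq)
  · rintro ⟨i, rfl⟩
    rw [← hF]
    exact hpmem i

end Backward

section Parts

variable {r : ℕ → ℕ → Prop}

lemma dispersive_of_surjective {G H : Type*} [Group G] [Finite G] [Group H]
    (hr : IsPrimeOrdering r) (f : G →* H) (hf : Function.Surjective f)
    (hG : IsPhiDispersive r G) : IsPhiDispersive r H := by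
  haveI : Finite H := Finite.of_surjective f hf
  apply dispersive_of_nhall hr
  intro p hp _
  obtain ⟨K, hK⟩ := nhall_of_dispersive hr hG p hp
  refine ⟨K.map f, hK.1.map f hf, ?_, ?_⟩
  · intro q hq hqd
    exact hK.2.1 q hq (hqd.trans (Subgroup.card_dvd_of_surjective (f.subgroupMap K)
      (f.subgroupMap_surjective K)))
  · intro q hq hqd
    exact hK.2.2 q hq (hqd.trans (Subgroup.index_map_dvd K hf))

lemma dispersive_of_mulEquiv {G H : Type*} [Group G] [Finite G] [Group H]
    (hr : IsPrimeOrdering r) (e : G ≃* H) (hG : IsPhiDispersive r G) :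
    IsPhiDispersive r H :=
  dispersive_of_surjective hr e.toMonoidHom e.surjective hG

lemma dispersive_of_subdirect {G : Type*} [Group G] [Finite G] (hr : IsPrimeOrdering r)
    (N₁ N₂ : Subgroup G) [hn1 : N₁.Normal] [hn2 : N₂.Normal] (hN : N₁ ⊓ N₂ = ⊥)
    (h1 : IsPhiDispersive r (G ⧸ N₁)) (h2 : IsPhiDispersive r (G ⧸ N₂)) :
    IsPhiDispersive r G := by
  apply dispersive_of_nhall hr
  intro p hp _
  obtain ⟨A₁, hA₁⟩ := nhall_of_dispersive hr h1 p hp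
  obtain ⟨A₂, hA₂⟩ := nhall_of_dispersive hr h2 p hp
  haveI := hA₁.1; haveI := hA₂.1
  set K₁ := A₁.comap (QuotientGroup.mk' N₁) with hK₁
  set K₂ := A₂.comap (QuotientGroup.mk' N₂) with hK₂
  haveI hKn1 : K₁.Normal := Subgroup.Normal.comap hA₁.1 _
  haveI hKn2 : K₂.Normal := Subgroup.Normal.comap hA₂.1 _
  refine ⟨K₁ ⊓ K₂, inferInstance, ?_, ?_⟩
  · intro q hq hqd
    -- K₁ ⊓ K₂ embeds into A₁ × A₂
    set ψ : ↥(K₁ ⊓ K₂) →* (G ⧸ N₁) × (G ⧸ N₂) :=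
      ((QuotientGroup.mk' N₁).prod (QuotientGroup.mk' N₂)).comp (K₁ ⊓ K₂).subtype with hψ
    have hmem : ∀ x : ↥(K₁ ⊓ K₂), ψ x ∈ A₁.prod A₂ := by
      intro x
      exact ⟨x.2.1, x.2.2⟩
    set φ : ↥(K₁ ⊓ K₂) →* ↥(A₁.prod A₂) := ψ.codRestrict _ hmem with hφ
    have hinj : Function.Injective φ := by
      refine (injective_iff_map_eq_one φ).mpr (fun x hx => ?_)
      have hx' : ψ x = 1 := congrArg Subtype.val hx
      have h1' : ((x : G) : G ⧸ N₁) = 1 := congrArg Prod.fst hx'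
      have h2' : ((x : G) : G ⧸ N₂) = 1 := congrArg Prod.snd hx'
      have hm1 : (x : G) ∈ N₁ := (QuotientGroup.eq_one_iff _).mp h1'
      have hm2 : (x : G) ∈ N₂ := (QuotientGroup.eq_one_iff _).mp h2'
      have : (x : G) ∈ N₁ ⊓ N₂ := ⟨hm1, hm2⟩
      rw [hN] at this
      exact Subtype.ext (by simpa using this)
    have hdvd : Nat.card (K₁ ⊓ K₂ : Subgroup G) ∣ Nat.card A₁ * Nat.card A₂ := by
      have := Subgroup.card_dvd_of_injective φ hinj
      rwa [Nat.card_congr (Subgroup.prodEquiv A₁ A₂).toEquiv, Nat.card_prod] at this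
    rcases (hq.dvd_mul).mp (hqd.trans hdvd) with hd | hd
    · exact hA₁.2.1 q hq hd
    · exact hA₂.2.1 q hq hd
  · intro q hq hqd
    set χ : G →* ((G ⧸ N₁) ⧸ A₁) × ((G ⧸ N₂) ⧸ A₂) :=
      ((QuotientGroup.mk' A₁).comp (QuotientGroup.mk' N₁)).prod
        ((QuotientGroup.mk' A₂).comp (QuotientGroup.mk' N₂)) with hχ
    have hker : χ.ker = K₁ ⊓ K₂ := by
      ext x
      simp only [hχ, MonoidHom.mem_ker, MonoidHom.prod_apply, MonoidHom.comp_apply,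
        Prod.mk_eq_one, QuotientGroup.mk'_apply, QuotientGroup.eq_one_iff,
        Subgroup.mem_inf, hK₁, hK₂, Subgroup.mem_comap]
    have hidx : (K₁ ⊓ K₂).index ∣ A₁.index * A₂.index := by
      have hd := Subgroup.card_dvd_of_injective (QuotientGroup.kerLift χ)
        (QuotientGroup.kerLift_injective χ)
      rw [hker] at hd
      have : Nat.card (((G ⧸ N₁) ⧸ A₁) × ((G ⧸ N₂) ⧸ A₂)) = A₁.index * A₂.index := by
        rw [Nat.card_prod]; rfl
      rw [this] at hd
      exact hd
    rcases (hq.dvd_mul).mp (hqd.trans hidx) with hd | hd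
    · exact hA₁.2.2 q hq hd
    · exact hA₂.2.2 q hq hd

end Parts

section Frattini

variable {r : ℕ → ℕ → Prop}

lemma dispersive_of_subsingleton {G : Type*} [Group G] (hG : Nat.card G = 1) :
    IsPhiDispersive r G := by
  have hsub : Subsingleton G := (Nat.card_eq_one_iff_unique.mp hG).1
  refine ⟨0, Fin.elim0, fun _ => ⊥, fun _ => inferInstance, ?_, ?_, ?_, rfl, ?_, ?_⟩
  · intro q
    simp [hG]
  · exact fun i => i.elim0
  · intro i j hij
    have h1 : (i : ℕ) < (j : ℕ) := hij
    have h2 := i.2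
    have h3 := j.2
    omega
  · exact Subgroup.ext fun x => by
      rw [Subsingleton.elim x 1]
      exact iff_of_true (one_mem _) trivial
  · exact fun i => i.elim0

lemma exists_max_prime (hr : IsPrimeOrdering r) :
    ∀ (F : Finset ℕ), (∀ q ∈ F, q.Prime) → F.Nonempty →
      ∃ p ∈ F, ∀ q ∈ F, q ≠ p → r q p := by
  classical
  intro F
  induction F using Finset.induction_on with
  | empty => intro _ hne; exact absurd hne (by simp)
  | @insert a F' ha ih =>
    intro hFp _
    by_cases hF' : F'.Nonempty
    · obtain ⟨m, hmF, hm⟩ := ih (fun q hq => hFp q (Finset.mem_insert_of_mem hq)) hF'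
      have hma : a ≠ m := fun h => ha (h ▸ hmF)
      have hap : a.Prime := hFp a (Finset.mem_insert_self a F')
      have hmp : m.Prime := hFp m (Finset.mem_insert_of_mem hmF)
      rcases hr.2.2 a m hap hmp hma with hx | hx
      · refine ⟨m, Finset.mem_insert_of_mem hmF, ?_⟩
        intro q hq hqm
        rcases Finset.mem_insert.mp hq with rfl | hq'
        · exact hx
        · exact hm q hq' hqm
      · refine ⟨a, Finset.mem_insert_self a F', ?_⟩
        intro q hq hqa
        rcases Finset.mem_insert.mp hq with rfl | hq'
        · exact absurd rfl hqa
        · by_cases hqm : q = m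
          · rw [hqm]; exact hx
          · exact hr.2.1 q m a (hFp q (Finset.mem_insert_of_mem hq')) hmp hap
              (hm q hq' hqm) hx
    · have hFa : F' = ∅ := Finset.not_nonempty_iff_eq_empty.mp hF'
      subst hFa
      refine ⟨a, Finset.mem_insert_self a ∅, ?_⟩
      intro q hq hqa
      rcases Finset.mem_insert.mp hq with rfl | hq'
      · exact absurd rfl hqa
      · exact absurd hq' (by simp)

lemma ker_le_comap_mk' {G : Type*} [Group G] (N : Subgroup G) [N.Normal]
    (B : Subgroup (G ⧸ N)) : N ≤ B.comap (QuotientGroup.mk' N) := by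
  intro x hx
  show ((x : G) : G ⧸ N) ∈ B
  have h1 : ((x : G) : G ⧸ N) = 1 := (QuotientGroup.eq_one_iff x).mpr hx
  rw [h1]
  exact B.one_mem

lemma comap_mk'_quotient_equiv {G : Type*} [Group G] (N : Subgroup G) [N.Normal]
    (B : Subgroup (G ⧸ N)) :
    haveI := Subgroup.Normal.subgroupOf (inferInstance : N.Normal)
      (B.comap (QuotientGroup.mk' N))
    Nonempty ((↥(B.comap (QuotientGroup.mk' N)) ⧸
      N.subgroupOf (B.comap (QuotientGroup.mk' N))) ≃* ↥B) := by
  haveI := Subgroup.Normal.subgroupOf (inferInstance : N.Normal)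
    (B.comap (QuotientGroup.mk' N))
  set K := B.comap (QuotientGroup.mk' N) with hK
  set g : ↥K →* ↥B := ((QuotientGroup.mk' N).domRestrict K).codRestrict B (fun x => x.2) with hg
  have hgsurj : Function.Surjective g := by
    rintro ⟨b, hb⟩
    obtain ⟨x, rfl⟩ := QuotientGroup.mk'_surjective N b
    exact ⟨⟨x, hb⟩, rfl⟩
  have hker : g.ker = N.subgroupOf K := by
    ext x
    simp only [hg, MonoidHom.mem_ker, Subgroup.mem_subgroupOf, Subtype.ext_iff,
      MonoidHom.codRestrict_apply, MonoidHom.domRestrict_apply, QuotientGroup.mk'_apply,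
      OneMemClass.coe_one, QuotientGroup.eq_one_iff]
    exact QuotientGroup.eq_one_iff (N := N) (x : G)
  exact ⟨(QuotientGroup.quotientMulEquivOfEq hker.symm).trans
    (QuotientGroup.quotientKerEquivOfSurjective g hgsurj)⟩

lemma card_comap_mk' {G : Type*} [Group G] [Finite G] (N : Subgroup G) [N.Normal]
    (B : Subgroup (G ⧸ N)) :
    Nat.card (B.comap (QuotientGroup.mk' N)) = Nat.card B * Nat.card N := by
  haveI := Subgroup.Normal.subgroupOf (inferInstance : N.Normal)
    (B.comap (QuotientGroup.mk' N))
  obtain ⟨e⟩ := comap_mk'_quotient_equiv N B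
  rw [Subgroup.card_eq_card_quotient_mul_card_subgroup
    (N.subgroupOf (B.comap (QuotientGroup.mk' N))), Nat.card_congr e.toEquiv,
    Nat.card_congr (Subgroup.subgroupOfEquivOfLe (ker_le_comap_mk' N B)).toEquiv]

lemma dispersive_of_normal_sylow {G : Type*} [Group G] [Finite G] (hr : IsPrimeOrdering r)
    {p₁ : ℕ} (hp₁ : p₁.Prime)
    (hmax : ∀ q : ℕ, q.Prime → q ∣ Nat.card G → q ≠ p₁ → r q p₁)
    (P : Subgroup G) [P.Normal] (hPcard : Nat.card P = p₁ ^ (Nat.card G).factorization p₁)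
    (hq : IsPhiDispersive r (G ⧸ P)) : IsPhiDispersive r G := by
  apply dispersive_of_nhall hr
  intro p hp hpd
  by_cases hpp : p = p₁
  · subst hpp
    refine ⟨P, inferInstance, ?_, ?_⟩
    · intro q hq' hqd
      rw [hPcard] at hqd
      exact Or.inl ((Nat.prime_dvd_prime_iff_eq hq' hp).mp (hq'.dvd_of_dvd_pow hqd))
    · intro q hq' hqd hmem
      rcases hmem with rfl | hmem
      · have hcon : q ^ ((Nat.card G).factorization q + 1) ∣ Nat.card P * P.index := by
          rw [hPcard, pow_succ]
          exact Nat.mul_dvd_mul_left _ hqd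
        rw [Subgroup.card_mul_index P] at hcon
        exact Nat.pow_succ_factorization_not_dvd Nat.card_pos.ne' hp hcon
      · have hqG : q ∣ Nat.card G := hqd.trans (Subgroup.index_dvd_card _)
        have hqnep : q ≠ p := fun h => hr.1 p hp (h ▸ hmem)
        exact prime_asymm hr hp hq' hmem (hmax q hq' hqG hqnep)
  · obtain ⟨B, hB⟩ := nhall_of_dispersive hr hq p hp
    haveI := hB.1
    haveI : (B.comap (QuotientGroup.mk' P)).Normal := Subgroup.Normal.comap hB.1 _
    refine ⟨B.comap (QuotientGroup.mk' P), inferInstance, ?_, ?_⟩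
    · intro q hq' hqd
      rw [card_comap_mk' P B] at hqd
      rcases (hq'.dvd_mul).mp hqd with hd | hd
      · exact hB.2.1 q hq' hd
      · rw [hPcard] at hd
        have hqp₁ : q = p₁ := (Nat.prime_dvd_prime_iff_eq hq' hp₁).mp (hq'.dvd_of_dvd_pow hd)
        subst hqp₁
        exact Or.inr (hmax p hp hpd hpp)
    · intro q hq' hqd
      rw [Subgroup.index_comap_of_surjective B (QuotientGroup.mk'_surjective P)] at hqd
      exact hB.2.2 q hq' hqd

end Frattini

section FrattiniMain

variable {r : ℕ → ℕ → Prop}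

universe u

lemma dispersive_of_frattini (hr : IsPrimeOrdering r) :
    ∀ (n : ℕ) (G : Type u) [Group G] [Finite G], Nat.card G = n →
      IsPhiDispersive r (G ⧸ frattini G) → IsPhiDispersive r G := by
  intro n
  induction n using Nat.strong_induction_on with
  | _ n ih =>
    intro G _ _ hn hGF
    by_cases hn1 : Nat.card G = 1
    · exact dispersive_of_subsingleton hn1
    have hn0 : Nat.card G ≠ 0 := Nat.card_pos.ne'
    have hFne : (Nat.card G).primeFactors.Nonempty := by
      apply Nat.nonempty_primeFactors.mpr
      omega
    obtain ⟨p₁, hp₁F, hp₁max⟩ := exists_max_prime hr _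
      (fun q hq => Nat.prime_of_mem_primeFactors hq) hFne
    have hp₁ : p₁.Prime := Nat.prime_of_mem_primeFactors hp₁F
    have hp₁d : p₁ ∣ Nat.card G := Nat.dvd_of_mem_primeFactors hp₁F
    have hmax : ∀ q : ℕ, q.Prime → q ∣ Nat.card G → q ≠ p₁ → r q p₁ := fun q hq hqd hne =>
      hp₁max q (Nat.mem_primeFactors.mpr ⟨hq, hqd, hn0⟩) hne
    obtain ⟨A, hA⟩ := nhall_of_dispersive hr hGF p₁ hp₁
    haveI := hA.1
    set K := A.comap (QuotientGroup.mk' (frattini G)) with hKdef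
    haveI hKn : K.Normal := Subgroup.Normal.comap hA.1 _
    have hΦK : frattini G ≤ K := ker_le_comap_mk' _ A
    haveI := Fact.mk hp₁
    obtain ⟨P⟩ : Nonempty (Sylow p₁ K) := Sylow.nonempty
    set P' := Subgroup.map K.subtype (P : Subgroup K) with hP'def
    have hP'K : P' ≤ K := Subgroup.map_subtype_le _
    have hidxA : ¬ p₁ ∣ A.index := fun hd => hA.2.2 p₁ hp₁ hd (Or.inl rfl)
    have hAprime : ∀ q : ℕ, q.Prime → q ∣ Nat.card A → q = p₁ := by
      intro q hq hqd
      rcases hA.2.1 q hq hqd with he | he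
      · exact he
      · exfalso
        have hqG : q ∣ Nat.card G := (hqd.trans (Subgroup.card_subgroup_dvd_card _)).trans
          (Subgroup.card_dvd_of_surjective _ (QuotientGroup.mk'_surjective (frattini G)))
        have hqnep : q ≠ p₁ := fun h => hr.1 p₁ hp₁ (h ▸ he)
        exact prime_asymm hr hp₁ hq he (hmax q hq hqG hqnep)
    have hKidx : K.index = A.index :=
      Subgroup.index_comap_of_surjective A (QuotientGroup.mk'_surjective _)
    -- ### Step 1: P' ⊔ Φ = K
    haveI : (P : Subgroup K).FiniteIndex := ⟨Subgroup.index_ne_zero_of_finite⟩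
    have hPidx : ¬ p₁ ∣ (P : Subgroup K).index := P.not_dvd_index
    haveI := Subgroup.Normal.subgroupOf (inferInstance : (frattini G).Normal) K
    obtain ⟨eA⟩ := comap_mk'_quotient_equiv (frattini G) A
    have hQK : P' ⊔ frattini G ≤ K := sup_le hP'K hΦK
    have hPQ' : (P : Subgroup K) ≤ (P' ⊔ frattini G).subgroupOf K := by
      have h1 : P'.subgroupOf K = (P : Subgroup K) := by
        rw [hP'def]
        exact Subgroup.comap_map_eq_self_of_injective K.subtype_injective _
      rw [← h1]
      exact Subgroup.comap_mono le_sup_left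
    have hd1 : ((P' ⊔ frattini G).subgroupOf K).index ∣ (P : Subgroup K).index :=
      Subgroup.index_dvd_of_le hPQ'
    have hd2 : ((P' ⊔ frattini G).subgroupOf K).index ∣ Nat.card A := by
      have hle : (frattini G).subgroupOf K ≤ (P' ⊔ frattini G).subgroupOf K :=
        Subgroup.comap_mono le_sup_right
      have hdd := Subgroup.index_dvd_of_le hle
      rwa [Subgroup.index_eq_card ((frattini G).subgroupOf K),
        Nat.card_congr eA.toEquiv] at hdd
    have hQtop : ((P' ⊔ frattini G).subgroupOf K).index = 1 := by
      by_contra hne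
      obtain ⟨q, hq, hqd⟩ := Nat.exists_prime_and_dvd hne
      have h1 : q = p₁ := hAprime q hq (hqd.trans hd2)
      subst h1
      exact hPidx (hqd.trans hd1)
    have hKQ : K ≤ P' ⊔ frattini G :=
      Subgroup.subgroupOf_eq_top.mp (Subgroup.index_eq_one.mp hQtop)
    have hQeq : P' ⊔ frattini G = K := le_antisymm hQK hKQ
    -- ### Step 2: Frattini argument, P' is normal
    have hfr : Subgroup.normalizer ((Subgroup.map K.subtype (P : Subgroup K)) : Set G) ⊔ K = ⊤ :=
      Sylow.normalizer_sup_eq_top P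
    have htop : Subgroup.normalizer (P' : Set G) ⊔ frattini G = ⊤ := by
      have h1 : Subgroup.normalizer (P' : Set G) ⊔ (P' ⊔ frattini G) = Subgroup.normalizer (P' : Set G) ⊔ frattini G := by
        rw [← sup_assoc, sup_of_le_left Subgroup.le_normalizer]
      rw [← h1, hQeq]
      exact hfr
    have hnorm' : Subgroup.normalizer (P' : Set G) = ⊤ := frattini_nongenerating htop
    haveI hP'norm : P'.Normal := Subgroup.normalizer_eq_top_iff.mp hnorm'
    -- ### Step 3: card of P'
    have hcardK : Nat.card K = Nat.card A * Nat.card (frattini G) :=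
      card_comap_mk' (frattini G) A
    have hKfact : (Nat.card K).factorization p₁ = (Nat.card G).factorization p₁ := by
      have h1 : Nat.card K * K.index = Nat.card G := Subgroup.card_mul_index K
      have h2 : ¬ p₁ ∣ K.index := by rw [hKidx]; exact hidxA
      rw [← h1, Nat.factorization_mul Nat.card_pos.ne' Subgroup.index_ne_zero_of_finite]
      simp [Nat.factorization_eq_zero_of_not_dvd h2]
    have hP'card : Nat.card P' = p₁ ^ (Nat.card G).factorization p₁ := by
      have h1 : Nat.card (P : Subgroup K) = Nat.card P' :=
        Nat.card_congr ((P : Subgroup K).equivMapOfInjective _ K.subtype_injective).toEquiv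
      rw [← h1, P.card_eq_multiplicity, hKfact]
    have hP'1 : 1 < Nat.card P' := by
      rw [hP'card]
      have hv : 0 < (Nat.card G).factorization p₁ :=
        hp₁.factorization_pos_of_dvd hn0 hp₁d
      exact Nat.one_lt_pow hv.ne' hp₁.one_lt
    have hqlt : Nat.card (G ⧸ P') < Nat.card G := by
      have h1 : Nat.card P' * P'.index = Nat.card G := Subgroup.card_mul_index P'
      have h2 : P'.index ≠ 0 := Subgroup.index_ne_zero_of_finite
      have h3 : Nat.card (G ⧸ P') = P'.index := (Subgroup.index_eq_card P').symm
      rw [h3, ← h1]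
      exact lt_mul_of_one_lt_left (Nat.pos_of_ne_zero h2) hP'1
    -- ### Step 4: (G/P')/Frattini is dispersive
    have himg : (frattini G).map (QuotientGroup.mk' P') ≤ frattini (G ⧸ P') :=
      Subgroup.map_le_iff_le_comap.mpr
        (frattini_le_comap_frattini_of_surjective (QuotientGroup.mk'_surjective P'))
    set π₂ : G →* ((G ⧸ P') ⧸ frattini (G ⧸ P')) :=
      (QuotientGroup.mk' (frattini (G ⧸ P'))).comp (QuotientGroup.mk' P') with hπ₂
    have hπ₂surj : Function.Surjective π₂ :=
      (QuotientGroup.mk'_surjective _).comp (QuotientGroup.mk'_surjective _)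
    have hΦker : frattini G ≤ π₂.ker := by
      intro x hx
      have h1 : (QuotientGroup.mk' P') x ∈ frattini (G ⧸ P') :=
        himg ⟨x, hx, rfl⟩
      show π₂ x = 1
      rw [hπ₂]
      simpa [MonoidHom.comp_apply, QuotientGroup.eq_one_iff] using h1
    have hliftsurj : Function.Surjective (QuotientGroup.lift (frattini G) π₂ hΦker) := by
      intro y
      obtain ⟨x, rfl⟩ := hπ₂surj y
      exact ⟨QuotientGroup.mk x, rfl⟩
    have hdisp2 : IsPhiDispersive r ((G ⧸ P') ⧸ frattini (G ⧸ P')) :=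
      dispersive_of_surjective hr _ hliftsurj hGF
    have hdispQ : IsPhiDispersive r (G ⧸ P') :=
      ih (Nat.card (G ⧸ P')) (hn ▸ hqlt) (G ⧸ P') rfl hdisp2
    exact dispersive_of_normal_sylow hr hp₁ hmax P' hP'card hdispQ

end FrattiniMain

/-- For any linear ordering `φ` of the primes, the class of finite `φ`-dispersive groups is a
saturated formation: it is closed under homomorphic images, under subdirect products
(`N₁ ∩ N₂ = 1` with both quotients `φ`-dispersive), and `G/Φ(G)` `φ`-dispersive implies `G`
`φ`-dispersive. -/
theorem phiDispersive_saturated_formation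
    (r : ℕ → ℕ → Prop) (hr : IsPrimeOrdering r) :
    (∀ (G H : Type) [Group G] [Finite G] [Group H] (f : G →* H),
        Function.Surjective f → IsPhiDispersive r G → IsPhiDispersive r H) ∧
    (∀ (G : Type) [Group G] [Finite G] (N₁ N₂ : Subgroup G) [N₁.Normal] [N₂.Normal],
        N₁ ⊓ N₂ = ⊥ → IsPhiDispersive r (G ⧸ N₁) → IsPhiDispersive r (G ⧸ N₂) →
        IsPhiDispersive r G) ∧
    (∀ (G : Type) [Group G] [Finite G],
        IsPhiDispersive r (G ⧸ frattini G) → IsPhiDispersive r G) := by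
  refine ⟨?_, ?_, ?_⟩
  · intro G H _ _ _ f hf hG
    exact dispersive_of_surjective hr f hf hG
  · intro G _ _ N₁ N₂ _ _ hN h1 h2
    exact dispersive_of_subdirect hr N₁ N₂ hN h1 h2
  · intro G _ _ h
    exact dispersive_of_frattini hr (Nat.card G) G rfl h
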